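/- If p and p' are distinct primes and s is a state of a deterministic transition graph from which both the language 1·(0^p)^* and the language 1·(0^{p'})^* are accepted (with suitable final-state sets), then the deterministic transition graph has at least p·p' states reachable from s by a word in 1·0^*, assuming the 0-successors of the 1-successor of s form a single cycle; more precisely, the length of the 0-cycle reached after reading 1 from s must be divisible by p·p'. -/

import Mathlib

/-- Run of a deterministic transition graph (partial transitions) over the
alphabet `{0,1}` (`false` is `0`, `true` is `1`). -/
def runW {Q : Type*} (δ : Q → Bool → Option Q) : List Bool → Q → Option Q
  | [], q => some q
  | a :: w, q => (δ q a).bind (runW δ w)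

lemma runW_append {Q : Type*} (δ : Q → Bool → Option Q) (w w' : List Bool) (q : Q) :
    runW δ (w ++ w') q = (runW δ w q).bind (runW δ w') := by
  induction w generalizing q with
  | nil => simp [runW]
  | cons a w ih =>
    simp only [List.cons_append, runW]
    cases δ q a with
    | none => simp
    | some r => simp [ih]

/-- If both `1·(0^p)^*` and `1·(0^{p'})^*` are accepted from a state `s` of a
deterministic transition graph (with suitable final-state sets), and after
reading `1` from `s` the `0`-successors form a single (simple) cycle of
length `ℓ`, then `p·p'` divides `ℓ` (so there are at least `p·p'` states
reachable from `s` by words in `1·0^*`). -/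
theorem stmt5 {Q : Type*} [Fintype Q] (δ : Q → Bool → Option Q)
    (p p' : ℕ) (hp : p.Prime) (hp' : p'.Prime) (hne : p ≠ p')
    (s t : Q) (F F' : Set Q)
    (hlangF : ∀ w : List Bool, (∃ q ∈ F, runW δ w s = some q) ↔
      ∃ k : ℕ, w = true :: List.replicate (k * p) false)
    (hlangF' : ∀ w : List Bool, (∃ q ∈ F', runW δ w s = some q) ↔
      ∃ k : ℕ, w = true :: List.replicate (k * p') false)
    (hst : δ s true = some t)
    (ℓ : ℕ) (hℓ : 0 < ℓ)
    (hcycle : runW δ (List.replicate ℓ false) t = some t)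
    (hsimple : Function.Injective
      (fun i : Fin ℓ => runW δ (List.replicate (i : ℕ) false) t)) :
    p * p' ∣ ℓ ∧
      p * p' ≤ Set.ncard
        {q : Q | ∃ k : ℕ, runW δ (true :: List.replicate k false) s = some q} := by
  -- running `true :: 0^k` from `s` equals running `0^k` from `t`
  have hrun : ∀ k : ℕ, runW δ (true :: List.replicate k false) s
      = runW δ (List.replicate k false) t := by
    intro k; simp [runW, hst]
  -- t is a final state of F (word `[true]`, k = 0)
  have htF : t ∈ F := by
    have h := (hlangF [true]).mpr ⟨0, by simp⟩
    obtain ⟨q, hq, hrq⟩ := h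
    have : runW δ [true] s = some t := by exact hrun 0
    rw [this] at hrq
    exact (Option.some_injective Q hrq) ▸ hq
  have htF' : t ∈ F' := by
    have h := (hlangF' [true]).mpr ⟨0, by simp⟩
    obtain ⟨q, hq, hrq⟩ := h
    have : runW δ [true] s = some t := by exact hrun 0
    rw [this] at hrq
    exact (Option.some_injective Q hrq) ▸ hq
  -- p divides ℓ
  have hpl : p ∣ ℓ := by
    have h : ∃ q ∈ F, runW δ (true :: List.replicate ℓ false) s = some q :=
      ⟨t, htF, by rw [hrun]; exact hcycle⟩
    obtain ⟨k, hk⟩ := (hlangF _).mp h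
    have : ℓ = k * p := by
      have := congrArg List.length hk
      simpa using this
    exact ⟨k, by rw [this]; ring⟩
  have hpl' : p' ∣ ℓ := by
    have h : ∃ q ∈ F', runW δ (true :: List.replicate ℓ false) s = some q :=
      ⟨t, htF', by rw [hrun]; exact hcycle⟩
    obtain ⟨k, hk⟩ := (hlangF' _).mp h
    have : ℓ = k * p' := by
      have := congrArg List.length hk
      simpa using this
    exact ⟨k, by rw [this]; ring⟩
  have hcop : Nat.Coprime p p' := (Nat.coprime_primes hp hp').mpr hne
  have hdvd : p * p' ∣ ℓ := hcop.mul_dvd_of_dvd_of_dvd hpl hpl'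
  refine ⟨hdvd, ?_⟩
  -- cardinality bound
  have hdef : ∀ i : Fin ℓ, (runW δ (List.replicate (i : ℕ) false) t).isSome := by
    intro i
    rcases h : runW δ (List.replicate (i : ℕ) false) t with _ | q
    · exfalso
      have hsplit : (List.replicate ℓ false : List Bool)
          = List.replicate (i : ℕ) false ++ List.replicate (ℓ - i) false := by
        rw [← List.replicate_add]; congr 1; omega
      rw [hsplit, runW_append, h] at hcycle
      simp at hcycle
    · simp
  set f : Fin ℓ → Q := fun i => (runW δ (List.replicate (i : ℕ) false) t).get (hdef i)
    with hf
  have hfeq : ∀ i : Fin ℓ, runW δ (List.replicate (i : ℕ) false) t = some (f i) := by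
    intro i; simp [hf]
  have hfinj : Function.Injective f := by
    intro i j hij
    apply hsimple
    simp only [hfeq i, hfeq j, hij]
  have hsub : Set.range f ⊆
      {q : Q | ∃ k : ℕ, runW δ (true :: List.replicate k false) s = some q} := by
    rintro q ⟨i, rfl⟩
    exact ⟨i, by rw [hrun]; exact hfeq i⟩
  have hfin : {q : Q | ∃ k : ℕ, runW δ (true :: List.replicate k false) s = some q}.Finite :=
    Set.toFinite _
  have hcard : (Set.range f).ncard = ℓ := by
    rw [← Set.image_univ, Set.ncard_image_of_injective _ hfinj, Set.ncard_univ,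
      Nat.card_eq_fintype_card, Fintype.card_fin]
  have hle : ℓ ≤ Set.ncard {q : Q | ∃ k : ℕ,
      runW δ (true :: List.replicate k false) s = some q} := by
    rw [← hcard]; exact Set.ncard_le_ncard hsub hfin
  exact le_trans (Nat.le_of_dvd hℓ hdvd) hle
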